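/- Let k be a field of characteristic ≠ 2, L a finite field extension of k, and Z the k-scheme defined as the subscheme λ = z² of R_{L/k}(G_m)/{±1} for λ ∈ L*. Then Z has a k-point if and only if λ ∈ k* L*², i.e., λ = t z² for some t ∈ k* and z ∈ L*. -/

import Mathlib

open TensorProduct Polynomial

set_option linter.unusedSectionVars false

open TensorProduct Polynomial

section Coord
variable {k L Ω : Type*} [Field k] [Field L] [Field Ω]
    [Algebra k L] [FiniteDimensional k L] [Algebra k Ω]

noncomputable def Phi (b : Module.Basis (Fin (Module.finrank k L)) k L)
    (i : Fin (Module.finrank k L)) : L ⊗[k] Ω →ₗ[k] Ω :=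
  (TensorProduct.lid k Ω).toLinearMap ∘ₗ LinearMap.rTensor Ω (b.coord i)

lemma Phi_tmul (b : Module.Basis (Fin (Module.finrank k L)) k L) (i) (x : L) (ω : Ω) :
    Phi b i (x ⊗ₜ ω) = b.repr x i • ω := by
  simp [Phi, Module.Basis.coord_apply]

lemma sum_repr' (b : Module.Basis (Fin (Module.finrank k L)) k L) (u : L ⊗[k] Ω) :
    u = ∑ i, b i ⊗ₜ Phi b i u := by
  induction u using TensorProduct.induction_on with
  | zero => simp
  | tmul x ω =>
      conv_lhs => rw [← b.sum_repr x]
      rw [sum_tmul]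
      refine Finset.sum_congr rfl fun i _ => ?_
      rw [Phi_tmul, smul_tmul]
  | add u v hu hv =>
      conv_lhs => rw [hu, hv]
      rw [← Finset.sum_add_distrib]
      refine Finset.sum_congr rfl fun i _ => ?_
      rw [map_add, tmul_add]

lemma Phi_map (b : Module.Basis (Fin (Module.finrank k L)) k L) (γ : Ω ≃ₐ[k] Ω) (i)
    (u : L ⊗[k] Ω) :
    Phi b i (Algebra.TensorProduct.map (AlgHom.id k L) γ.toAlgHom u) = γ (Phi b i u) := by
  induction u using TensorProduct.induction_on with
  | zero => simp
  | tmul x ω => simp [Phi_tmul, map_smul]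
  | add u v hu hv => simp only [map_add, hu, hv]

lemma tmul_one_inj (x y : L) (h : x ⊗ₜ[k] (1 : Ω) = y ⊗ₜ[k] (1 : Ω)) : x = y := by
  let b := Module.finBasis k L
  apply b.repr.injective
  ext i
  have := congrArg (Phi (Ω := Ω) b i) h
  rw [Phi_tmul, Phi_tmul] at this
  simpa [Algebra.algebraMap_eq_smul_one] using
    (algebraMap k Ω).injective (by simpa [Algebra.algebraMap_eq_smul_one] using this)

end Coord

theorem fixed_mem (k Ω : Type*) [Field k] [Field Ω] [Algebra k Ω] [IsSepClosure k Ω]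
    (x : Ω) (h : ∀ γ : Ω ≃ₐ[k] Ω, γ x = x) : ∃ t : k, algebraMap k Ω t = x := by
  have hsep : (minpoly k x).Separable := Algebra.IsSeparable.isSeparable k x
  have hint : IsIntegral k x := Algebra.IsSeparable.isIntegral k x
  by_contra hx
  push_neg at hx
  have hx' : x ∉ (algebraMap k Ω).range := by rintro ⟨t, rfl⟩; exact hx t rfl
  have hdeg : 2 ≤ (minpoly k x).natDegree := (minpoly.two_le_natDegree_iff hint).mpr hx'
  -- roots of minpoly in Ω
  set p := minpoly k x with hp
  have hsplits : Splits (p.map (algebraMap k Ω)) := Normal.splits inferInstance x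
  have hcard : (p.aroots Ω).card = p.natDegree := by
    rw [aroots_def, ← natDegree_map (algebraMap k Ω)]
    exact (splits_iff_card_roots.mp hsplits)
  have hnodup : (p.aroots Ω).Nodup := nodup_roots (hsep.map)
  have hxmem : x ∈ p.aroots Ω := by
    rw [mem_aroots]
    exact ⟨minpoly.ne_zero hint, minpoly.aeval k x⟩
  -- find another root
  have : ∃ y ∈ p.aroots Ω, y ≠ x := by
    classical
    by_contra hc
    push_neg at hc
    have hsub : (p.aroots Ω).toFinset ⊆ {x} := by
      intro y hy
      rw [Multiset.mem_toFinset] at hy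
      rw [Finset.mem_singleton]
      exact hc y hy
    have h1 : (p.aroots Ω).toFinset.card ≤ 1 := by
      simpa using Finset.card_le_card hsub
    rw [Multiset.toFinset_card_of_nodup hnodup, hcard] at h1
    omega
  obtain ⟨y, hy, hyx⟩ := this
  have hyroot : (Polynomial.aeval y) (minpoly k x) = 0 := by
    rw [mem_aroots] at hy; exact hy.2
  obtain ⟨σ, hσ⟩ := minpoly.exists_algEquiv_of_root' hint.isAlgebraic hyroot
  exact hyx (by rw [← hσ, h σ])

/-- Let `k` be a field of characteristic `≠ 2`, `L/k` a finite
(separable, as `L` is an étale `k`-algebra in the source) field extension, `λ ∈ L*`, and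
`Z ⊂ R_{L/k}(𝔾ₘ)/{±1}` the `k`-torsor for `R_{L/k}(μ₂)/μ₂` given by `λ = z²`.  Then `Z`
has a `k`-point iff `λ ∈ k^* L^{*2}`, i.e. `λ = t z²` for some `t ∈ k^*`, `z ∈ L^*`.
A `k`-point of `Z` is formalized by Galois descent: fixing a separable closure `Ω` of
`k`, it is an element `u` of `(L ⊗_k Ω)^*`, taken up to sign, with `u² = λ ⊗ 1` which is
fixed up to sign by every element of `Gal(Ω/k)` (acting through the second factor). -/
theorem stmt19 (k L Ω : Type*) [Field k] [Field L] [Field Ω]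
    [Algebra k L] [FiniteDimensional k L] [Algebra.IsSeparable k L]
    [Algebra k Ω] [IsSepClosure k Ω]
    (hchar : ringChar k ≠ 2)
    (lam : L) (hlam : lam ≠ 0) :
    (∃ u : L ⊗[k] Ω, u * u = lam ⊗ₜ[k] (1 : Ω) ∧
      ∀ γ : Ω ≃ₐ[k] Ω,
        Algebra.TensorProduct.map (AlgHom.id k L) γ.toAlgHom u = u ∨
        Algebra.TensorProduct.map (AlgHom.id k L) γ.toAlgHom u = -u)
    ↔ (∃ t : k, t ≠ 0 ∧ ∃ z : L, z ≠ 0 ∧ lam = algebraMap k L t * (z * z)) := by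
  constructor
  · rintro ⟨u, hu2, hu⟩
    set b := Module.finBasis k L with hb
    have hlamne : (lam ⊗ₜ[k] (1:Ω)) ≠ 0 := fun h0 =>
      hlam (tmul_one_inj lam 0 (by simpa using h0))
    have hune : u ≠ 0 := fun h0 => hlamne (by rw [← hu2, h0, mul_zero])
    have hexists : ∃ i, Phi b i u ≠ 0 := by
      by_contra hc
      push_neg at hc
      exact hune (by rw [sum_repr' b u]; simp [hc])
    obtain ⟨i0, hi0⟩ := hexists
    set s := Phi b i0 u with hs
    have hsign : ∀ γ : Ω ≃ₐ[k] Ω,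
        (∀ i, γ (Phi b i u) = Phi b i u) ∨ (∀ i, γ (Phi b i u) = -(Phi b i u)) := by
      intro γ
      rcases hu γ with h1 | h1
      · exact Or.inl fun i => by rw [← Phi_map b γ i u, h1]
      · exact Or.inr fun i => by rw [← Phi_map b γ i u, h1, map_neg]
    obtain ⟨t, ht⟩ := fixed_mem k Ω (s*s) (fun γ => by
      rcases hsign γ with h1 | h1
      · rw [map_mul, h1 i0, ← hs]
      · rw [map_mul, h1 i0, ← hs, neg_mul_neg])
    have ht0 : t ≠ 0 := by
      intro h0
      rw [h0, map_zero] at ht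
      exact mul_self_ne_zero.mpr hi0 ht.symm
    have hcoord : ∀ j, ∃ d : k, Phi b j u = algebraMap k Ω d * s := by
      intro j
      obtain ⟨d, hd⟩ := fixed_mem k Ω (Phi b j u * s⁻¹) (fun γ => by
        rcases hsign γ with h1 | h1
        · rw [map_mul, h1 j, map_inv₀, h1 i0, ← hs]
        · rw [map_mul, h1 j, map_inv₀, h1 i0, ← hs, inv_neg, neg_mul_neg])
      exact ⟨d, by rw [hd]; field_simp⟩
    choose d hd using hcoord
    set z := ∑ j, d j • b j with hz
    have huz : u = z ⊗ₜ s := by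
      conv_lhs => rw [sum_repr' b u]
      rw [hz, sum_tmul]
      refine Finset.sum_congr rfl fun j _ => ?_
      rw [hd j, ← Algebra.smul_def, smul_tmul]
    have hz0 : z ≠ 0 := by
      intro h0
      rw [huz, h0, zero_tmul] at hune
      exact hune rfl
    refine ⟨t, ht0, z, hz0, ?_⟩
    apply tmul_one_inj (k := k) (Ω := Ω)
    rw [← hu2, huz, Algebra.TensorProduct.tmul_mul_tmul, ← ht,
      Algebra.algebraMap_eq_smul_one, tmul_smul, smul_tmul', ← Algebra.smul_def]
  · rintro ⟨t, ht0, z, hz0, hlz⟩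
    have hΩsep : IsSepClosed Ω := IsSepClosure.sep_closed k
    have h2k : (2:k) ≠ 0 := by
      intro h2
      have hd : ringChar k ∣ 2 := ringChar.dvd h2
      haveI := ringChar.charP k
      rcases CharP.char_is_prime_or_zero k (ringChar k) with hp | hp
      · exact hchar ((Nat.prime_dvd_prime_iff_eq hp Nat.prime_two).mp hd)
      · rw [hp] at hd; exact absurd (Nat.eq_zero_of_zero_dvd hd) (by norm_num)
    have h2Ω : ((2:ℕ):Ω) ≠ 0 := by
      intro h2
      apply h2k
      apply (algebraMap k Ω).injective
      rw [map_ofNat, map_zero]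
      exact_mod_cast h2
    set t' := algebraMap k Ω t with ht'
    have ht'0 : t' ≠ 0 := fun h0 => ht0 ((algebraMap k Ω).injective (by rw [map_zero]; exact h0))
    have hsep : (X ^ 2 - C t').Separable := separable_X_pow_sub_C t' h2Ω ht'0
    have hdeg : (X ^ 2 - C t').degree ≠ 0 := by
      rw [degree_X_pow_sub_C (by norm_num)]
      norm_num
    obtain ⟨s, hsroot⟩ := IsSepClosed.exists_root (X ^ 2 - C t') hdeg hsep
    have hss : s * s = t' := by
      have := hsroot
      rw [IsRoot, eval_sub, eval_pow, eval_X, eval_C, sub_eq_zero, sq] at this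
      exact this
    refine ⟨z ⊗ₜ s, ?_, ?_⟩
    · rw [Algebra.TensorProduct.tmul_mul_tmul, hss, ht', hlz,
        Algebra.algebraMap_eq_smul_one, tmul_smul, smul_tmul', ← Algebra.smul_def]
    · intro γ
      have hγs : γ s = s ∨ γ s = -s := by
        have h1 : γ s * γ s = s * s := by
          rw [← map_mul, hss, ht', γ.commutes t]
        exact mul_self_eq_mul_self_iff.mp h1
      rcases hγs with h1 | h1
      · left
        rw [Algebra.TensorProduct.map_tmul, AlgHom.id_apply, AlgEquiv.toAlgHom_eq_coe,
          AlgEquiv.coe_toAlgHom, h1]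
      · right
        rw [Algebra.TensorProduct.map_tmul, AlgHom.id_apply, AlgEquiv.toAlgHom_eq_coe,
          AlgEquiv.coe_toAlgHom, h1, tmul_neg]
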